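/- ∫₀^∞ H(y) dy = 1 and ∫₀^∞ y^{−1} H(y) dy = 1; consequently y ↦ y^{−1} H(y) is the density of a probability distribution on (0, ∞) with mean 1. -/

import Mathlib

open MeasureTheory

/-- `H(y) = 4y² ∑_{n=1}^∞ (2π²n⁴y² − 3πn²) exp(−πn²y²)`. -/
noncomputable def H (y : ℝ) : ℝ :=
  4 * y ^ 2 * ∑' n : ℕ,
    (2 * Real.pi ^ 2 * ((n : ℝ) + 1) ^ 4 * y ^ 2 - 3 * Real.pi * ((n : ℝ) + 1) ^ 2) *
      Real.exp (-Real.pi * ((n : ℝ) + 1) ^ 2 * y ^ 2)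

open Real Filter Set Topology

/-- Auxiliary theta-type series. -/
noncomputable def Gk (k : ℕ) (t : ℝ) : ℝ :=
  ∑' n : ℕ, ((n : ℝ) + 1) ^ k * Real.exp (-Real.pi * ((n : ℝ) + 1) ^ 2 * t)

lemma summable_Gk (k : ℕ) {t : ℝ} (ht : 0 < t) :
    Summable (fun n : ℕ => ((n : ℝ) + 1) ^ k * Real.exp (-Real.pi * ((n : ℝ) + 1) ^ 2 * t)) := by
  have hr : ‖Real.exp (-Real.pi * t)‖ < 1 := by
    rw [Real.norm_eq_abs, abs_of_nonneg (Real.exp_nonneg _)]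
    exact Real.exp_lt_one_iff.mpr (by nlinarith [Real.pi_pos])
  have h1 : Summable (fun n : ℕ => (n : ℝ) ^ k * Real.exp (-Real.pi * t) ^ n) :=
    summable_pow_mul_geometric_of_norm_lt_one k hr
  have h2 : Summable (fun n : ℕ => ((n + 1 : ℕ) : ℝ) ^ k * Real.exp (-Real.pi * t) ^ (n + 1)) :=
    h1.comp_injective (add_left_injective 1)
  refine Summable.of_nonneg_of_le (fun n => by positivity) (fun n => ?_) h2
  push_cast
  refine mul_le_mul_of_nonneg_left ?_ (by positivity)
  rw [← Real.exp_nat_mul]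
  apply Real.exp_le_exp.2
  push_cast
  have hn : (0:ℝ) ≤ (n:ℝ) := (n:ℕ).cast_nonneg
  nlinarith [mul_nonneg (mul_pos Real.pi_pos ht).le
    (by nlinarith : (0:ℝ) ≤ ((n:ℝ)+1)^2 - ((n:ℝ)+1))]

lemma Gk_nonneg (k : ℕ) (t : ℝ) : 0 ≤ Gk k t :=
  tsum_nonneg fun n => by positivity

lemma hasDerivAt_Gk (k : ℕ) {t : ℝ} (ht : 0 < t) :
    HasDerivAt (Gk k) (-Real.pi * Gk (k + 2) t) t := by
  have key : HasDerivAt (fun z => ∑' n : ℕ, ((n : ℝ) + 1) ^ k *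
        Real.exp (-Real.pi * ((n : ℝ) + 1) ^ 2 * z))
      (∑' n : ℕ, (-Real.pi) * (((n : ℝ) + 1) ^ (k + 2) *
        Real.exp (-Real.pi * ((n : ℝ) + 1) ^ 2 * t))) t := by
    refine hasDerivAt_tsum_of_isPreconnected
      (g := fun (n : ℕ) (z : ℝ) => ((n : ℝ) + 1) ^ k * Real.exp (-Real.pi * ((n : ℝ) + 1) ^ 2 * z))
      (g' := fun (n : ℕ) (z : ℝ) => (-Real.pi) * (((n : ℝ) + 1) ^ (k + 2) *
        Real.exp (-Real.pi * ((n : ℝ) + 1) ^ 2 * z)))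
      (t := Set.Ioo (t / 2) (t + 1))
      (u := fun n : ℕ => Real.pi * (((n : ℝ) + 1) ^ (k + 2) *
        Real.exp (-Real.pi * ((n : ℝ) + 1) ^ 2 * (t / 2))))
      (((summable_Gk (k + 2) (half_pos ht)).mul_left Real.pi)) isOpen_Ioo isPreconnected_Ioo
      (fun n y _ => ?_) (fun n y hy => ?_) (Set.mem_Ioo.2 ⟨half_lt_self ht, lt_add_one t⟩)
      (summable_Gk k ht) (Set.mem_Ioo.2 ⟨half_lt_self ht, lt_add_one t⟩)
    · have h1 := (hasDerivAt_id y).const_mul (-Real.pi * ((n : ℝ) + 1) ^ 2)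
      have h2 := (h1.exp).const_mul (((n : ℝ) + 1) ^ k)
      simp only [id_eq] at h2
      refine h2.congr_deriv ?_
      ring
    · have hy1 : t/2 ≤ y := (Set.mem_Ioo.1 hy).1.le
      rw [Real.norm_eq_abs, abs_mul, abs_of_nonpos (neg_nonpos.2 Real.pi_pos.le),
        abs_of_nonneg (by positivity), neg_neg]
      refine mul_le_mul_of_nonneg_left ?_ Real.pi_pos.le
      refine mul_le_mul_of_nonneg_left ?_ (by positivity)
      refine Real.exp_le_exp.2 ?_
      nlinarith [mul_nonneg (mul_nonneg Real.pi_pos.le (sq_nonneg ((n:ℝ)+1)))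
        (sub_nonneg.2 hy1)]
  rw [tsum_mul_left] at key
  exact key


lemma H_eq {y : ℝ} (hy : 0 < y) :
    H y = 8*Real.pi^2*y^4 * Gk 4 (y^2) - 12*Real.pi*y^2 * Gk 2 (y^2) := by
  have ht : 0 < y^2 := by positivity
  have h4 := (summable_Gk 4 ht).mul_left (2*Real.pi^2*y^2)
  have h2 := (summable_Gk 2 ht).mul_left (3*Real.pi)
  rw [H, Gk, Gk]
  rw [show (fun n : ℕ => (2 * Real.pi ^ 2 * ((n : ℝ) + 1) ^ 4 * y ^ 2 -
        3 * Real.pi * ((n : ℝ) + 1) ^ 2) * Real.exp (-Real.pi * ((n : ℝ) + 1) ^ 2 * y ^ 2)) =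
      fun n : ℕ => (2*Real.pi^2*y^2) *
          (((n : ℝ) + 1)^4 * Real.exp (-Real.pi * ((n : ℝ) + 1) ^ 2 * y ^ 2)) -
        (3*Real.pi) * (((n : ℝ) + 1)^2 * Real.exp (-Real.pi * ((n : ℝ) + 1) ^ 2 * y ^ 2))
      from funext fun n => by ring]
  rw [Summable.tsum_sub h4 h2, tsum_mul_left, tsum_mul_left]
  ring

lemma hasDerivAt_F1 {y : ℝ} (hy : 0 < y) :
    HasDerivAt (fun x => -4*Real.pi*x^3 * Gk 2 (x^2)) (H y) y := by
  have ht : 0 < y^2 := by positivity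
  have hsq : HasDerivAt (fun x : ℝ => x^2) (2*y) y := by simpa using hasDerivAt_pow 2 y
  have hG : HasDerivAt (fun x : ℝ => Gk 2 (x^2)) (-Real.pi * Gk 4 (y^2) * (2*y)) y := by
    have := HasDerivAt.comp (h := fun x : ℝ => x ^ 2) (x := y) (hasDerivAt_Gk 2 ht) hsq
    simpa [Function.comp_def] using this
  have hcube : HasDerivAt (fun x : ℝ => -4*Real.pi*x^3) (-4*Real.pi*(3*y^2)) y := by
    have := (hasDerivAt_pow 3 y).const_mul (-4*Real.pi)
    refine this.congr_deriv ?_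
    all_goals (push_cast; ring)
  have := hcube.mul hG
  rw [H_eq hy]
  refine this.congr_deriv ?_
  ring

lemma hasDerivAt_F2 {y : ℝ} (hy : 0 < y) :
    HasDerivAt (fun x => -4*Real.pi*x^2 * Gk 2 (x^2) + 2 * Gk 0 (x^2)) (y⁻¹ * H y) y := by
  have ht : 0 < y^2 := by positivity
  have hsq : HasDerivAt (fun x : ℝ => x^2) (2*y) y := by simpa using hasDerivAt_pow 2 y
  have hG2 : HasDerivAt (fun x : ℝ => Gk 2 (x^2)) (-Real.pi * Gk 4 (y^2) * (2*y)) y := by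
    have := HasDerivAt.comp (h := fun x : ℝ => x ^ 2) (x := y) (hasDerivAt_Gk 2 ht) hsq
    simpa [Function.comp_def] using this
  have hG0 : HasDerivAt (fun x : ℝ => Gk 0 (x^2)) (-Real.pi * Gk 2 (y^2) * (2*y)) y := by
    have := HasDerivAt.comp (h := fun x : ℝ => x ^ 2) (x := y) (hasDerivAt_Gk 0 ht) hsq
    simpa [Function.comp_def] using this
  have hquad : HasDerivAt (fun x : ℝ => -4*Real.pi*x^2) (-4*Real.pi*(2*y)) y := by
    have := hsq.const_mul (-4*Real.pi)
    convert this using 1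
    all_goals ring
  have := (hquad.mul hG2).add (hG0.const_mul (2:ℝ))
  rw [H_eq hy]
  refine this.congr_deriv ?_
  field_simp
  ring

lemma summable_natcast {a : ℝ} (ha : 0 < a) :
    Summable (fun n : ℕ => Real.exp (-Real.pi * a * ((n : ℤ) : ℝ)^2)) := by
  rw [← summable_nat_add_iff 1]
  refine (summable_Gk 0 ha).congr fun n => ?_
  push_cast
  rw [pow_zero, one_mul]
  congr 1
  ring

lemma summable_negcast {a : ℝ} (ha : 0 < a) :
    Summable (fun n : ℕ => Real.exp (-Real.pi * a * ((-((n : ℤ) + 1) : ℤ) : ℝ)^2)) := by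
  refine (summable_Gk 0 ha).congr fun n => ?_
  push_cast
  rw [pow_zero, one_mul]
  congr 1
  ring

lemma int_sum_eq {a : ℝ} (ha : 0 < a) :
    ∑' n : ℤ, Real.exp (-Real.pi * a * (n : ℝ)^2) = 1 + 2 * Gk 0 a := by
  have key := tsum_of_nat_of_neg_add_one
    (f := fun n : ℤ => Real.exp (-Real.pi * a * (n : ℝ)^2))
    (summable_natcast ha) (summable_negcast ha)
  rw [key, Summable.tsum_eq_zero_add (summable_natcast ha)]
  have e1 : ∑' n : ℕ, Real.exp (-Real.pi * a * (((n + 1 : ℕ) : ℤ) : ℝ)^2) = Gk 0 a := by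
    refine tsum_congr fun n => ?_
    push_cast
    rw [pow_zero, one_mul]
    congr 1
    ring
  have e2 : ∑' n : ℕ, Real.exp (-Real.pi * a * ((-((n : ℤ) + 1) : ℤ) : ℝ)^2) = Gk 0 a := by
    refine tsum_congr fun n => ?_
    push_cast
    rw [pow_zero, one_mul]
    congr 1
    ring
  rw [e1, e2]
  norm_num
  ring

lemma FE {t : ℝ} (ht : 0 < t) :
    1 + 2 * Gk 0 t = (1 / Real.sqrt t) * (1 + 2 * Gk 0 t⁻¹) := by
  have h := Real.tsum_exp_neg_mul_int_sq ht
  rw [int_sum_eq ht] at h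
  have h2 : (∑' n : ℤ, Real.exp (-Real.pi / t * (n : ℝ)^2)) = 1 + 2 * Gk 0 t⁻¹ := by
    rw [← int_sum_eq (inv_pos.2 ht)]
    refine tsum_congr fun n => ?_
    rw [div_eq_mul_inv]
  rw [h2] at h
  rw [h, Real.sqrt_eq_rpow]

lemma FE_y {y : ℝ} (hy : 0 < y) :
    Gk 0 (y^2) = (1 + 2 * Gk 0 ((y^2)⁻¹))/(2*y) - 1/2 := by
  have h := FE (t := y^2) (by positivity)
  rw [Real.sqrt_sq hy.le] at h
  have hy' : y ≠ 0 := ne_of_gt hy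
  field_simp at h ⊢
  linarith

lemma ident_A {y : ℝ} (hy : 0 < y) :
    -4*Real.pi*y^3 * Gk 2 (y^2) =
      -1 - 2 * Gk 0 ((y^2)⁻¹) + 4*Real.pi*((y^2)⁻¹ * Gk 2 ((y^2)⁻¹)) := by
  have ht : 0 < y^2 := by positivity
  have hw : 0 < (y^2)⁻¹ := by positivity
  have hsq : HasDerivAt (fun x : ℝ => x^2) (2*y) y := by simpa using hasDerivAt_pow 2 y
  have hL : HasDerivAt (fun x : ℝ => Gk 0 (x^2)) (-Real.pi * Gk 2 (y^2) * (2*y)) y := by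
    have := HasDerivAt.comp (h := fun x : ℝ => x ^ 2) (x := y) (hasDerivAt_Gk 0 ht) hsq
    simpa [Function.comp_def] using this
  have hinner : HasDerivAt (fun x : ℝ => (x^2)⁻¹) (-(2*y)/(y^2)^2) y := hsq.inv (ne_of_gt ht)
  have hGin : HasDerivAt (fun x : ℝ => Gk 0 ((x^2)⁻¹))
      (-Real.pi * Gk 2 ((y^2)⁻¹) * (-(2*y)/(y^2)^2)) y := by
    have := HasDerivAt.comp (h := fun x : ℝ => (x^2)⁻¹) (x := y) (hasDerivAt_Gk 0 hw) hinner
    simpa [Function.comp_def] using this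
  have hnum := (hGin.const_mul (2:ℝ)).const_add (1:ℝ)
  have hden : HasDerivAt (fun x : ℝ => 2*x) 2 y := by
    simpa using (hasDerivAt_id y).const_mul (2:ℝ)
  have hR := (hnum.div hden (by positivity : (2:ℝ)*y ≠ 0)).sub_const (1/2 : ℝ)
  have heq : (fun x : ℝ => (1 + 2 * Gk 0 ((x^2)⁻¹))/(2*x) - 1/2) =ᶠ[nhds y]
      (fun x : ℝ => Gk 0 (x^2)) := by
    filter_upwards [Ioi_mem_nhds hy] with x hx
    exact (FE_y hx).symm
  have key := (hL.congr_of_eventuallyEq heq).unique hR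
  have hy0 : (y:ℝ) ≠ 0 := hy.ne'
  field_simp at key ⊢
  apply mul_left_cancel₀ (show (2*y^2 : ℝ) ≠ 0 by positivity)
  linear_combination 2*y^2*key

lemma ident_C {y : ℝ} (hy : 0 < y) :
    H y = (-12*Real.pi * Gk 2 ((y^2)⁻¹) * y^2 + 8*Real.pi^2 * Gk 4 ((y^2)⁻¹)) / y^5 := by
  have ht : 0 < y^2 := by positivity
  have hw : 0 < (y^2)⁻¹ := by positivity
  have hsq : HasDerivAt (fun x : ℝ => x^2) (2*y) y := by simpa using hasDerivAt_pow 2 y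
  have hinner : HasDerivAt (fun x : ℝ => (x^2)⁻¹) (-(2*y)/(y^2)^2) y := hsq.inv (ne_of_gt ht)
  have hGin0 : HasDerivAt (fun x : ℝ => Gk 0 ((x^2)⁻¹))
      (-Real.pi * Gk 2 ((y^2)⁻¹) * (-(2*y)/(y^2)^2)) y := by
    have := HasDerivAt.comp (h := fun x : ℝ => (x^2)⁻¹) (x := y) (hasDerivAt_Gk 0 hw) hinner
    simpa [Function.comp_def] using this
  have hGin2 : HasDerivAt (fun x : ℝ => Gk 2 ((x^2)⁻¹))
      (-Real.pi * Gk 4 ((y^2)⁻¹) * (-(2*y)/(y^2)^2)) y := by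
    have := HasDerivAt.comp (h := fun x : ℝ => (x^2)⁻¹) (x := y) (hasDerivAt_Gk 2 hw) hinner
    simpa [Function.comp_def] using this
  have hprod := hinner.mul hGin2
  have hR := ((hGin0.const_mul (2:ℝ)).const_sub (-1 : ℝ)).add (hprod.const_mul (4*Real.pi))
  have heq : (fun x : ℝ => -1 - 2 * Gk 0 ((x^2)⁻¹) + 4*Real.pi*((x^2)⁻¹ * Gk 2 ((x^2)⁻¹)))
      =ᶠ[nhds y] (fun x : ℝ => -4*Real.pi*x^3 * Gk 2 (x^2)) := by
    filter_upwards [Ioi_mem_nhds hy] with x hx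
    exact (ident_A hx).symm
  have hR' : HasDerivAt
      (fun x : ℝ => -1 - 2 * Gk 0 ((x^2)⁻¹) + 4*Real.pi*((x^2)⁻¹ * Gk 2 ((x^2)⁻¹))) (H y) y :=
    (hasDerivAt_F1 hy).congr_of_eventuallyEq heq
  have key := hR'.unique hR
  rw [key]
  have hy0 : (y:ℝ) ≠ 0 := hy.ne'
  field_simp
  ring

lemma ident_B {y : ℝ} (hy : 0 < y) :
    -4*Real.pi*y^2 * Gk 2 (y^2) + 2 * Gk 0 (y^2) =
      -1 + 4*Real.pi*(y⁻¹ * ((y^2)⁻¹ * Gk 2 ((y^2)⁻¹))) := by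
  have hA := ident_A hy
  have hF := FE_y hy
  have hy0 : (y:ℝ) ≠ 0 := hy.ne'
  field_simp at hA hF ⊢
  linear_combination hA + y^2 * hF

lemma Gk_le (k : ℕ) {t : ℝ} (ht : 1 ≤ t) :
    Gk k t ≤ Gk k (1/2) * Real.exp (-(Real.pi/2) * t) := by
  have h0 : (0:ℝ) < 1/2 := one_half_pos
  rw [Gk, Gk, ← tsum_mul_right]
  refine Summable.tsum_le_tsum (fun n => ?_) (summable_Gk k (by linarith)) ((summable_Gk k h0).mul_right _)
  have hrw : ((n:ℝ)+1)^k * Real.exp (-Real.pi*((n:ℝ)+1)^2*(1/2)) * Real.exp (-(Real.pi/2)*t)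
      = ((n:ℝ)+1)^k * Real.exp (-Real.pi*((n:ℝ)+1)^2*(1/2) + -(Real.pi/2)*t) := by
    rw [Real.exp_add]; ring
  rw [hrw]
  refine mul_le_mul_of_nonneg_left ?_ (by positivity)
  rw [Real.exp_le_exp]
  have hq : 1 ≤ ((n:ℝ)+1)^2 := by nlinarith [(n:ℕ).cast_nonneg (α := ℝ)]
  nlinarith [mul_nonneg (mul_nonneg Real.pi_pos.le (le_of_lt (lt_of_lt_of_le one_pos hq)))
      (sub_nonneg.2 ht),
    mul_nonneg (mul_nonneg Real.pi_pos.le (le_trans zero_le_one ht)) (sub_nonneg.2 hq)]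

lemma tendsto_pow_mul_Gk (k m : ℕ) :
    Filter.Tendsto (fun t : ℝ => t ^ m * Gk k t) Filter.atTop (nhds 0) := by
  have base : Filter.Tendsto (fun t : ℝ => Gk k (1/2) * (t ^ m * Real.exp (-t)))
      Filter.atTop (nhds (Gk k (1/2) * 0)) :=
    (tendsto_pow_mul_exp_neg_atTop_nhds_zero m).const_mul _
  rw [mul_zero] at base
  refine squeeze_zero' ?_ ?_ base
  · filter_upwards [eventually_ge_atTop (0:ℝ)] with t htt
    exact mul_nonneg (pow_nonneg htt m) (Gk_nonneg k t)
  · filter_upwards [eventually_ge_atTop (1:ℝ)] with t htt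
    have ht0 : (0:ℝ) ≤ t := le_trans zero_le_one htt
    have h1 : Gk k t ≤ Gk k (1/2) * Real.exp (-(Real.pi/2)*t) := Gk_le k htt
    have h2 : Real.exp (-(Real.pi/2)*t) ≤ Real.exp (-t) := by
      rw [Real.exp_le_exp]
      nlinarith [Real.pi_gt_three]
    calc t^m * Gk k t ≤ t^m * (Gk k (1/2) * Real.exp (-(Real.pi/2)*t)) :=
          mul_le_mul_of_nonneg_left h1 (by positivity)
      _ = Gk k (1/2) * (t^m * Real.exp (-(Real.pi/2)*t)) := by ring
      _ ≤ Gk k (1/2) * (t^m * Real.exp (-t)) :=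
          mul_le_mul_of_nonneg_left
            (mul_le_mul_of_nonneg_left h2 (by positivity)) (Gk_nonneg k (1/2))

lemma tendsto_w : Filter.Tendsto (fun y : ℝ => ((y^2)⁻¹ : ℝ)) (nhdsWithin 0 (Set.Ioi 0))
    Filter.atTop := by
  have h1 : Filter.Tendsto (fun y : ℝ => y^2) (nhdsWithin 0 (Set.Ioi 0))
      (nhdsWithin 0 (Set.Ioi 0)) := by
    apply tendsto_nhdsWithin_of_tendsto_nhds_of_eventually_within
    · have h := ((continuous_pow 2 (M := ℝ)).continuousAt (x := 0)).tendsto.mono_left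
        (nhdsWithin_le_nhds (s := Set.Ioi (0:ℝ)))
      simpa using h
    · filter_upwards [self_mem_nhdsWithin] with x hx
      exact pow_pos (show (0:ℝ) < x from hx) 2
  exact tendsto_inv_nhdsGT_zero.comp h1

lemma tendsto_w_pow_Gk (k m : ℕ) :
    Filter.Tendsto (fun y : ℝ => ((y^2)⁻¹)^m * Gk k ((y^2)⁻¹)) (nhdsWithin 0 (Set.Ioi 0))
      (nhds 0) :=
  (tendsto_pow_mul_Gk k m).comp tendsto_w

lemma exp_cube_le {w : ℝ} (hw : 0 < w) : Real.exp (-(Real.pi/2)*w) * w^3 ≤ 6 := by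
  have h1' : Real.exp (-(Real.pi/2)*w) ≤ Real.exp (-w) := by
    rw [Real.exp_le_exp]
    nlinarith [Real.pi_gt_three]
  have hcube : w^3 ≤ 6 * Real.exp w := by
    have := Real.pow_div_factorial_le_exp (hx := hw.le) (n := 3)
    norm_num [Nat.factorial] at this
    linarith
  have h2' : Real.exp (-w) * w^3 ≤ 6 := by
    rw [Real.exp_neg, inv_mul_le_iff₀ (Real.exp_pos w)]
    linarith
  calc Real.exp (-(Real.pi/2)*w) * w^3 ≤ Real.exp (-w) * w^3 :=
        mul_le_mul_of_nonneg_right h1' (by positivity)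
    _ ≤ 6 := h2'

lemma bound01 {y : ℝ} (h1 : 0 < y) (h2 : y ≤ 1) :
    |y⁻¹ * H y| ≤ (12*Real.pi*Gk 2 (1/2) + 8*Real.pi^2*Gk 4 (1/2)) * 6 := by
  set w : ℝ := (y^2)⁻¹ with hwdef
  have hw0 : 0 < w := by rw [hwdef]; positivity
  have hw1 : 1 ≤ w := by
    rw [hwdef, show (1:ℝ) = (1:ℝ)⁻¹ by norm_num]
    exact inv_anti₀ (by positivity) (by nlinarith)
  have hG2 := Gk_nonneg 2 w
  have hG4 := Gk_nonneg 4 w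
  have hC2 := Gk_nonneg 2 (1/2)
  have hC4 := Gk_nonneg 4 (1/2)
  have hE : (0:ℝ) ≤ Real.exp (-(Real.pi/2)*w) := (Real.exp_pos _).le
  have e : y⁻¹ * H y = (-12*Real.pi*Gk 2 w *y^2 + 8*Real.pi^2*Gk 4 w) * w^3 := by
    rw [ident_C h1, hwdef]
    ring
  have hA : (0:ℝ) ≤ 12*Real.pi*Gk 2 w*y^2 :=
    mul_nonneg (mul_nonneg (by positivity) hG2) (sq_nonneg y)
  have hB : (0:ℝ) ≤ 8*Real.pi^2*Gk 4 w := by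
    have := hG4; positivity
  have g2 := Gk_le 2 hw1
  have g4 := Gk_le 4 hw1
  have step : 12*Real.pi*Gk 2 w + 8*Real.pi^2*Gk 4 w ≤
      (12*Real.pi*Gk 2 (1/2) + 8*Real.pi^2*Gk 4 (1/2)) * Real.exp (-(Real.pi/2)*w) := by
    nlinarith [mul_le_mul_of_nonneg_left g2 (show (0:ℝ) ≤ 12*Real.pi by positivity),
      mul_le_mul_of_nonneg_left g4 (show (0:ℝ) ≤ 8*Real.pi^2 by positivity)]
  calc |y⁻¹ * H y| = |(-12*Real.pi*Gk 2 w *y^2 + 8*Real.pi^2*Gk 4 w)| * w^3 := by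
        rw [e, abs_mul, abs_of_nonneg (by positivity : (0:ℝ) ≤ w^3)]
    _ ≤ (12*Real.pi*Gk 2 w*y^2 + 8*Real.pi^2*Gk 4 w) * w^3 := by
        refine mul_le_mul_of_nonneg_right ?_ (by positivity)
        rw [abs_le]
        constructor <;> nlinarith [hA, hB]
    _ ≤ (12*Real.pi*Gk 2 w + 8*Real.pi^2*Gk 4 w) * w^3 := by
        refine mul_le_mul_of_nonneg_right ?_ (by positivity)
        nlinarith [mul_nonneg (mul_nonneg (show (0:ℝ) ≤ 12*Real.pi by positivity) hG2)
          (by nlinarith : (0:ℝ) ≤ 1 - y^2)]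
    _ ≤ ((12*Real.pi*Gk 2 (1/2) + 8*Real.pi^2*Gk 4 (1/2)) * Real.exp (-(Real.pi/2)*w)) * w^3 :=
        mul_le_mul_of_nonneg_right step (by positivity)
    _ = (12*Real.pi*Gk 2 (1/2) + 8*Real.pi^2*Gk 4 (1/2)) * (Real.exp (-(Real.pi/2)*w) * w^3) := by
        ring
    _ ≤ (12*Real.pi*Gk 2 (1/2) + 8*Real.pi^2*Gk 4 (1/2)) * 6 := by
        refine mul_le_mul_of_nonneg_left (exp_cube_le hw0) (by positivity)

lemma bound01' {y : ℝ} (h1 : 0 < y) (h2 : y ≤ 1) :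
    |H y| ≤ (12*Real.pi*Gk 2 (1/2) + 8*Real.pi^2*Gk 4 (1/2)) * 6 := by
  have h := bound01 h1 h2
  have e : H y = y * (y⁻¹ * H y) := by
    field_simp
  rw [e, abs_mul, abs_of_nonneg h1.le]
  calc y * |y⁻¹ * H y| ≤ 1 * |y⁻¹ * H y| :=
        mul_le_mul_of_nonneg_right h2 (abs_nonneg _)
    _ = |y⁻¹ * H y| := one_mul _
    _ ≤ _ := h

lemma aux_exp {u v : ℝ} (hu : 1 ≤ u) (hv : v ≤ u) :
    u^2 * Real.exp (-(Real.pi/2)*u) ≤ 2*Real.exp (-(1/2)*v) := by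
  have hu0 : 0 < u := lt_of_lt_of_le one_pos hu
  have h1 : Real.exp (-(Real.pi/2)*u) ≤ Real.exp (-u) * Real.exp (-(1/2)*u) := by
    rw [← Real.exp_add, Real.exp_le_exp]
    nlinarith [Real.pi_gt_three]
  have h2 : u^2 ≤ 2 * Real.exp u := by
    have := Real.pow_div_factorial_le_exp (hx := hu0.le) (n := 2)
    norm_num [Nat.factorial] at this
    linarith
  have h3 : u^2 * Real.exp (-u) ≤ 2 := by
    rw [Real.exp_neg, mul_inv_le_iff₀ (Real.exp_pos u)]
    linarith
  have h4 : Real.exp (-(1/2)*u) ≤ Real.exp (-(1/2)*v) := by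
    rw [Real.exp_le_exp]
    linarith
  calc u^2 * Real.exp (-(Real.pi/2)*u) ≤ u^2 * (Real.exp (-u) * Real.exp (-(1/2)*u)) :=
        mul_le_mul_of_nonneg_left h1 (by positivity)
    _ = (u^2 * Real.exp (-u)) * Real.exp (-(1/2)*u) := by ring
    _ ≤ 2 * Real.exp (-(1/2)*u) :=
        mul_le_mul_of_nonneg_right h3 (Real.exp_pos _).le
    _ ≤ 2 * Real.exp (-(1/2)*v) := by
        nlinarith [h4]

lemma boundIoi1 {y : ℝ} (hy : 1 ≤ y) :
    |H y| ≤ (12*Real.pi*Gk 2 (1/2) + 8*Real.pi^2*Gk 4 (1/2)) * (2*Real.exp (-(1/2) * y)) := by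
  have hy0 : 0 < y := lt_of_lt_of_le one_pos hy
  have ht1 : 1 ≤ y^2 := by nlinarith
  have hG2 := Gk_nonneg 2 (y^2)
  have hG4 := Gk_nonneg 4 (y^2)
  have hC2 := Gk_nonneg 2 (1/2)
  have hC4 := Gk_nonneg 4 (1/2)
  have g2 := Gk_le 2 ht1
  have g4 := Gk_le 4 ht1
  have hy24 : y^2 ≤ y^4 := by nlinarith
  have habs : |H y| ≤ 12*Real.pi*y^4*Gk 2 (y^2) + 8*Real.pi^2*y^4*Gk 4 (y^2) := by
    rw [H_eq hy0, abs_le]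
    have k1 : (0:ℝ) ≤ 12*Real.pi*y^2*Gk 2 (y^2) := by positivity
    have k2 : (0:ℝ) ≤ 8*Real.pi^2*y^4*Gk 4 (y^2) := by positivity
    have k3 : 12*Real.pi*y^2*Gk 2 (y^2) ≤ 12*Real.pi*y^4*Gk 2 (y^2) := by
      nlinarith [mul_nonneg (mul_nonneg (show (0:ℝ) ≤ 12*Real.pi by positivity) hG2)
        (sub_nonneg.2 hy24)]
    constructor <;> nlinarith
  have step : 12*Real.pi*Gk 2 (y^2) + 8*Real.pi^2*Gk 4 (y^2) ≤
      (12*Real.pi*Gk 2 (1/2) + 8*Real.pi^2*Gk 4 (1/2)) * Real.exp (-(Real.pi/2)*(y^2)) := by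
    nlinarith [mul_le_mul_of_nonneg_left g2 (show (0:ℝ) ≤ 12*Real.pi by positivity),
      mul_le_mul_of_nonneg_left g4 (show (0:ℝ) ≤ 8*Real.pi^2 by positivity)]
  have hE : (0:ℝ) ≤ Real.exp (-(Real.pi/2)*(y^2)) := (Real.exp_pos _).le
  calc |H y| ≤ 12*Real.pi*y^4*Gk 2 (y^2) + 8*Real.pi^2*y^4*Gk 4 (y^2) := habs
    _ = (12*Real.pi*Gk 2 (y^2) + 8*Real.pi^2*Gk 4 (y^2)) * y^4 := by ring
    _ ≤ ((12*Real.pi*Gk 2 (1/2) + 8*Real.pi^2*Gk 4 (1/2)) * Real.exp (-(Real.pi/2)*(y^2))) * y^4 :=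
        mul_le_mul_of_nonneg_right step (by positivity)
    _ = (12*Real.pi*Gk 2 (1/2) + 8*Real.pi^2*Gk 4 (1/2)) * ((y^2)^2 * Real.exp (-(Real.pi/2)*(y^2))) := by
        ring
    _ ≤ (12*Real.pi*Gk 2 (1/2) + 8*Real.pi^2*Gk 4 (1/2)) * (2*Real.exp (-(1/2) * y)) := by
        refine mul_le_mul_of_nonneg_left (aux_exp ht1 (by nlinarith)) (by positivity)

noncomputable def F1 : ℝ → ℝ := fun y =>
  if y ≤ 0 then -1 else -4*Real.pi*y^3 * Gk 2 (y^2)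

noncomputable def F2 : ℝ → ℝ := fun y =>
  if y ≤ 0 then -1 else -4*Real.pi*y^2 * Gk 2 (y^2) + 2 * Gk 0 (y^2)

lemma F1_eq {y : ℝ} (hy : 0 < y) : F1 y = -4*Real.pi*y^3 * Gk 2 (y^2) := by
  rw [F1, if_neg (not_le.2 hy)]

lemma F2_eq {y : ℝ} (hy : 0 < y) : F2 y = -4*Real.pi*y^2 * Gk 2 (y^2) + 2 * Gk 0 (y^2) := by
  rw [F2, if_neg (not_le.2 hy)]

lemma hasDerivAt_F1' {y : ℝ} (hy : 0 < y) : HasDerivAt F1 (H y) y := by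
  refine (hasDerivAt_F1 hy).congr_of_eventuallyEq ?_
  filter_upwards [Ioi_mem_nhds hy] with x hx
  exact F1_eq hx

lemma hasDerivAt_F2' {y : ℝ} (hy : 0 < y) : HasDerivAt F2 (y⁻¹ * H y) y := by
  refine (hasDerivAt_F2 hy).congr_of_eventuallyEq ?_
  filter_upwards [Ioi_mem_nhds hy] with x hx
  exact F2_eq hx

lemma tendsto_F1_zero : Filter.Tendsto F1 (nhdsWithin 0 (Set.Ioi 0)) (nhds (-1)) := by
  have l1 : Filter.Tendsto (fun y : ℝ => Gk 0 ((y^2)⁻¹)) (nhdsWithin 0 (Set.Ioi 0)) (nhds 0) := by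
    have := tendsto_w_pow_Gk 0 0
    simpa using this
  have l2 : Filter.Tendsto (fun y : ℝ => (y^2)⁻¹ * Gk 2 ((y^2)⁻¹)) (nhdsWithin 0 (Set.Ioi 0))
      (nhds 0) := by
    have := tendsto_w_pow_Gk 2 1
    simpa using this
  have T := ((tendsto_const_nhds (x := (-1:ℝ))
      (f := nhdsWithin 0 (Set.Ioi 0))).sub (l1.const_mul 2)).add (l2.const_mul (4*Real.pi))
  norm_num at T
  refine T.congr' ?_
  filter_upwards [self_mem_nhdsWithin] with y hy
  rw [F1_eq hy, ident_A hy]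
  try ring

lemma tendsto_F2_zero : Filter.Tendsto F2 (nhdsWithin 0 (Set.Ioi 0)) (nhds (-1)) := by
  have l3 : Filter.Tendsto (fun y : ℝ => y⁻¹ * ((y^2)⁻¹ * Gk 2 ((y^2)⁻¹)))
      (nhdsWithin 0 (Set.Ioi 0)) (nhds 0) := by
    refine squeeze_zero' ?_ ?_ (tendsto_w_pow_Gk 2 2)
    · filter_upwards [self_mem_nhdsWithin] with y hy
      have := Gk_nonneg 2 ((y^2)⁻¹)
      have hy' : (0:ℝ) < y := hy
      positivity
    · filter_upwards [Ioc_mem_nhdsGT_of_mem (by norm_num : (0:ℝ) ∈ Set.Ico (0:ℝ) 1)] with y hy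
      have hy0 : 0 < y := hy.1
      have hinv : (y:ℝ)⁻¹ ≤ (y^2)⁻¹ := by
        apply inv_anti₀ (by positivity)
        nlinarith [hy.2]
      have hGn := Gk_nonneg 2 ((y^2)⁻¹)
      calc y⁻¹ * ((y^2)⁻¹ * Gk 2 ((y^2)⁻¹)) ≤ (y^2)⁻¹ * ((y^2)⁻¹ * Gk 2 ((y^2)⁻¹)) := by
            refine mul_le_mul_of_nonneg_right hinv (by positivity)
        _ = ((y^2)⁻¹)^2 * Gk 2 ((y^2)⁻¹) := by ring
  have T := (tendsto_const_nhds (x := (-1:ℝ))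
      (f := nhdsWithin 0 (Set.Ioi 0))).add (l3.const_mul (4*Real.pi))
  norm_num at T
  refine T.congr' ?_
  filter_upwards [self_mem_nhdsWithin] with y hy
  rw [F2_eq hy, ident_B hy]
  try ring

lemma tendsto_F1_top : Filter.Tendsto F1 Filter.atTop (nhds 0) := by
  have base : Filter.Tendsto (fun y : ℝ => 4*Real.pi*((y^2)^2 * Gk 2 (y^2))) Filter.atTop
      (nhds (4*Real.pi*0)) :=
    ((tendsto_pow_mul_Gk 2 2).comp (tendsto_pow_atTop two_ne_zero)).const_mul _
  rw [mul_zero] at base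
  refine squeeze_zero_norm' ?_ base
  filter_upwards [eventually_ge_atTop (1:ℝ)] with y hy
  have hy0 : 0 < y := lt_of_lt_of_le one_pos hy
  have hGn := Gk_nonneg 2 (y^2)
  rw [F1_eq hy0, Real.norm_eq_abs, abs_of_nonpos (by nlinarith [mul_nonneg (mul_nonneg
    (show (0:ℝ) ≤ 4*Real.pi by positivity) (by positivity : (0:ℝ) ≤ y^3)) hGn])]
  have h34 : y^3 ≤ y^4 := pow_le_pow_right₀ hy (by norm_num)
  calc -(-4*Real.pi*y^3 * Gk 2 (y^2)) = 4*Real.pi*(y^3 * Gk 2 (y^2)) := by ring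
    _ ≤ 4*Real.pi*(y^4 * Gk 2 (y^2)) := by
        refine mul_le_mul_of_nonneg_left (mul_le_mul_of_nonneg_right h34 hGn) (by positivity)
    _ = 4*Real.pi*((y^2)^2 * Gk 2 (y^2)) := by ring

lemma tendsto_F2_top : Filter.Tendsto F2 Filter.atTop (nhds 0) := by
  have l4 : Filter.Tendsto (fun y : ℝ => (y^2)^1 * Gk 2 (y^2)) Filter.atTop (nhds 0) :=
    (tendsto_pow_mul_Gk 2 1).comp (tendsto_pow_atTop two_ne_zero)
  have l5 : Filter.Tendsto (fun y : ℝ => (y^2)^0 * Gk 0 (y^2)) Filter.atTop (nhds 0) :=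
    (tendsto_pow_mul_Gk 0 0).comp (tendsto_pow_atTop two_ne_zero)
  have T := (l4.const_mul (-4*Real.pi)).add (l5.const_mul 2)
  norm_num at T
  refine T.congr' ?_
  filter_upwards [eventually_gt_atTop (0:ℝ)] with y hy
  rw [F2_eq hy]
  try ring

lemma continuousOn_H : ContinuousOn H (Set.Ioi 0) := by
  intro y hy
  have hy' : (0:ℝ) < y := hy
  have ht : 0 < y^2 := by positivity
  have c4 : ContinuousAt (fun x : ℝ => Gk 4 (x^2)) y :=
    ContinuousAt.comp (f := fun x : ℝ => x^2) ((hasDerivAt_Gk 4 ht).continuousAt)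
      ((continuous_pow 2).continuousAt)
  have c2 : ContinuousAt (fun x : ℝ => Gk 2 (x^2)) y :=
    ContinuousAt.comp (f := fun x : ℝ => x^2) ((hasDerivAt_Gk 2 ht).continuousAt)
      ((continuous_pow 2).continuousAt)
  have cbig : ContinuousAt
      (fun x : ℝ => 8*Real.pi^2*x^4 * Gk 4 (x^2) - 12*Real.pi*x^2 * Gk 2 (x^2)) y :=
    (((continuous_const.mul (continuous_pow 4)).continuousAt).mul c4).sub
      (((continuous_const.mul (continuous_pow 2)).continuousAt).mul c2)
  refine (cbig.congr ?_).continuousWithinAt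
  filter_upwards [Ioi_mem_nhds hy'] with x hx
  exact (H_eq hx).symm

lemma integrableH : IntegrableOn H (Set.Ioi 0) := by
  rw [← Set.Ioc_union_Ioi_eq_Ioi (zero_le_one : (0:ℝ) ≤ 1)]
  refine IntegrableOn.union ?_ ?_
  · have meas : AEStronglyMeasurable H (volume.restrict (Set.Ioc 0 1)) :=
      (continuousOn_H.mono Set.Ioc_subset_Ioi_self).aestronglyMeasurable measurableSet_Ioc
    refine Integrable.mono'
      (integrable_const ((12*Real.pi*Gk 2 (1/2) + 8*Real.pi^2*Gk 4 (1/2)) * 6)) meas ?_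
    rw [ae_restrict_iff' measurableSet_Ioc]
    filter_upwards with x hx
    rw [Real.norm_eq_abs]
    exact bound01' hx.1 hx.2
  · have meas : AEStronglyMeasurable H (volume.restrict (Set.Ioi 1)) :=
      (continuousOn_H.mono (fun x (hx : x ∈ Set.Ioi (1:ℝ)) => (lt_trans one_pos hx : (0:ℝ) < x))).aestronglyMeasurable
        measurableSet_Ioi
    refine Integrable.mono'
      ((exp_neg_integrableOn_Ioi 1 (by norm_num : (0:ℝ) < 1/2)).const_mul
        ((12*Real.pi*Gk 2 (1/2) + 8*Real.pi^2*Gk 4 (1/2)) * 2)) meas ?_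
    rw [ae_restrict_iff' measurableSet_Ioi]
    filter_upwards with x hx
    rw [Real.norm_eq_abs]
    refine le_trans (boundIoi1 (le_of_lt hx)) (le_of_eq ?_)
    ring

lemma integrableH2 : IntegrableOn (fun y : ℝ => y⁻¹ * H y) (Set.Ioi 0) := by
  have contOn : ContinuousOn (fun y : ℝ => y⁻¹ * H y) (Set.Ioi 0) := by
    refine ContinuousOn.mul ?_ continuousOn_H
    exact ContinuousOn.inv₀ continuousOn_id (fun x hx => ne_of_gt hx)
  rw [← Set.Ioc_union_Ioi_eq_Ioi (zero_le_one : (0:ℝ) ≤ 1)]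
  refine IntegrableOn.union ?_ ?_
  · have meas : AEStronglyMeasurable (fun y : ℝ => y⁻¹ * H y) (volume.restrict (Set.Ioc 0 1)) :=
      (contOn.mono Set.Ioc_subset_Ioi_self).aestronglyMeasurable measurableSet_Ioc
    refine Integrable.mono'
      (integrable_const ((12*Real.pi*Gk 2 (1/2) + 8*Real.pi^2*Gk 4 (1/2)) * 6)) meas ?_
    rw [ae_restrict_iff' measurableSet_Ioc]
    filter_upwards with x hx
    rw [Real.norm_eq_abs]
    exact bound01 hx.1 hx.2
  · have meas : AEStronglyMeasurable (fun y : ℝ => y⁻¹ * H y) (volume.restrict (Set.Ioi 1)) :=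
      (contOn.mono (fun x (hx : x ∈ Set.Ioi (1:ℝ)) => (lt_trans one_pos hx : (0:ℝ) < x))).aestronglyMeasurable measurableSet_Ioi
    refine Integrable.mono'
      ((exp_neg_integrableOn_Ioi 1 (by norm_num : (0:ℝ) < 1/2)).const_mul
        ((12*Real.pi*Gk 2 (1/2) + 8*Real.pi^2*Gk 4 (1/2)) * 2)) meas ?_
    rw [ae_restrict_iff' measurableSet_Ioi]
    filter_upwards with x hx
    rw [Real.norm_eq_abs, abs_mul, abs_inv]
    have hx0 : (0:ℝ) < x := lt_trans one_pos hx
    have habs : |x|⁻¹ ≤ 1 := by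
      rw [abs_of_pos hx0]
      exact inv_le_one_of_one_le₀ (le_of_lt hx)
    calc |x|⁻¹ * |H x| ≤ 1 * |H x| := mul_le_mul_of_nonneg_right habs (abs_nonneg _)
      _ = |H x| := one_mul _
      _ ≤ (12*Real.pi*Gk 2 (1/2) + 8*Real.pi^2*Gk 4 (1/2)) * (2*Real.exp (-(1/2) * x)) :=
          boundIoi1 (le_of_lt hx)
      _ = (12*Real.pi*Gk 2 (1/2) + 8*Real.pi^2*Gk 4 (1/2)) * 2 * Real.exp (-(1/2) * x) := by
          ring

/-- `∫₀^∞ H(y) dy = 1` and `∫₀^∞ y⁻¹ H(y) dy = 1`: thus `y ↦ y⁻¹H(y)` is a probability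
density on `(0,∞)` with mean `1`. -/
theorem H_density_integrals :
    (∫ y in Set.Ioi (0 : ℝ), H y = 1) ∧ (∫ y in Set.Ioi (0 : ℝ), y⁻¹ * H y = 1) := by
  have h10 : F1 0 = -1 := by simp [F1]
  have h20 : F2 0 = -1 := by simp [F2]
  have hcont1 : ContinuousWithinAt F1 (Set.Ici 0) 0 := by
    rw [← Set.Ioi_insert, continuousWithinAt_insert_self]
    show Filter.Tendsto F1 _ (nhds (F1 0))
    rw [h10]
    exact tendsto_F1_zero
  have hcont2 : ContinuousWithinAt F2 (Set.Ici 0) 0 := by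
    rw [← Set.Ioi_insert, continuousWithinAt_insert_self]
    show Filter.Tendsto F2 _ (nhds (F2 0))
    rw [h20]
    exact tendsto_F2_zero
  constructor
  · have key := integral_Ioi_of_hasDerivAt_of_tendsto (f := F1) (f' := H) (a := 0) (m := 0)
      hcont1 (fun x hx => hasDerivAt_F1' hx) integrableH tendsto_F1_top
    rw [key, h10]
    norm_num
  · have key := integral_Ioi_of_hasDerivAt_of_tendsto (f := F2)
      (f' := fun y : ℝ => y⁻¹ * H y) (a := 0) (m := 0)
      hcont2 (fun x hx => hasDerivAt_F2' hx) integrableH2 tendsto_F2_top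
    rw [key, h20]
    norm_num
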